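/- Let H be a finitely generated free abelian group, ι_u and ι_ζ two ring involutions of ℤ[H] of the form h ↦ (−1)^{u(h)}·h and h ↦ (−1)^{ζ(h)}·h for homomorphisms u, ζ : H → ℤ. Suppose m ∈ ℤ[H] is an element whose support generates H as an abelian group, 1 ∈ supp(m), and ι_u(m) = λ·ι_ζ(m) for some unit λ = ±h₀ of ℤ[H]. If moreover there exists w ∈ Hom(H,ℝ) that is strictly positive on supp(m) \ {1}, then u ≡ ζ mod 2 (i.e., (−1)^{u(h)} = (−1)^{ζ(h)} for all h ∈ H). -/

import Mathlib

/-- The sign `(-1)^z` of an integer `z`. -/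
def sgn (z : ℤ) : ℤ := if Even z then 1 else -1

/-- The group ring `ℤ[H]` of a (multiplicatively written) free abelian group. -/
abbrev ZH (G : Type) [AddCommGroup G] := MonoidAlgebra ℤ (Multiplicative G)

/-- The ring involution `ι_u : ℤ[H] → ℤ[H]` extending `h ↦ (-1)^{u(h)}·h`. -/
noncomputable def iotaAt {G : Type} [AddCommGroup G] (u : G →+ ℤ) (P : ZH G) : ZH G :=
  Finsupp.sum P.coeff fun h a =>
    MonoidAlgebra.single h (sgn (u (Multiplicative.toAdd h)) * a)

lemma iotaAt_apply {G : Type} [AddCommGroup G] (u : G →+ ℤ) (P : ZH G) (h : Multiplicative G) :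
    (iotaAt u P).coeff h = sgn (u (Multiplicative.toAdd h)) * P.coeff h := by
  classical
  rw [iotaAt, MonoidAlgebra.coeff_finsuppSum, Finsupp.sum_apply, Finsupp.sum]
  simp only [MonoidAlgebra.coeff_single, Finsupp.single_apply]
  rw [Finset.sum_ite_eq' P.coeff.support h (fun h' => sgn (u (Multiplicative.toAdd h')) * P.coeff h')]
  split_ifs with hm
  · rfl
  · rw [Finsupp.notMem_support_iff.mp hm, mul_zero]

example {G : Type} [AddCommGroup G] (f : ZH G) (a c : Multiplicative G) (b : ℤ) :
    (MonoidAlgebra.single a b * f).coeff c = b * f.coeff (a⁻¹ * c) :=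
  MonoidAlgebra.coeff_single_mul_apply f b a c

lemma sgn_ne_zero (z : ℤ) : sgn z ≠ 0 := by unfold sgn; split_ifs <;> simp

lemma sgn_eq_iff {a b : ℤ} : sgn a = sgn b ↔ (Even a ↔ Even b) := by
  unfold sgn; split_ifs with h1 h2 h2 <;> simp_all
  exact iff_of_false (by simpa using h1) (by simpa using h2)

/-- Let `H` be a finitely generated free abelian group, `ι_u, ι_ζ`
the involutions of `ℤ[H]` attached to homomorphisms `u, ζ : H → ℤ`.  Suppose `m ∈ ℤ[H]`
has support generating `H`, with `1 ∈ supp(m)`, and `ι_u(m) = λ·ι_ζ(m)` for a unit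
`λ = ±h₀`.  If moreover some `w ∈ Hom(H, ℝ)` is strictly positive on `supp(m) \ {1}`,
then `u ≡ ζ (mod 2)`. -/
theorem involutions_agree_mod_two
    {G : Type} [AddCommGroup G] [Module.Free ℤ G] [Module.Finite ℤ G]
    (u ζ : G →+ ℤ) (m : ZH G)
    (hgen : Subgroup.closure ((Finsupp.support m.coeff : Finset (Multiplicative G)) : Set (Multiplicative G)) = ⊤)
    (hone : (1 : Multiplicative G) ∈ Finsupp.support m.coeff)
    (hrel : ∃ (s : ℤ) (h₀ : Multiplicative G), (s = 1 ∨ s = -1) ∧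
      iotaAt u m = MonoidAlgebra.single h₀ s * iotaAt ζ m)
    (w : G →+ ℝ)
    (hw : ∀ h ∈ Finsupp.support m.coeff, h ≠ (1 : Multiplicative G) →
      0 < w (Multiplicative.toAdd h)) :
    ∀ g : G, (Even (u g) ↔ Even (ζ g)) := by
  classical
  obtain ⟨s, h₀, hs, heq⟩ := hrel
  have hm1 : m.coeff 1 ≠ 0 := Finsupp.mem_support_iff.mp hone
  have hs0 : s ≠ 0 := by rcases hs with h | h <;> simp [h]
  have key : ∀ h : Multiplicative G,
      sgn (u (Multiplicative.toAdd h)) * m.coeff h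
        = s * (sgn (ζ (Multiplicative.toAdd (h₀⁻¹ * h))) * m.coeff (h₀⁻¹ * h)) := by
    intro h
    have := congrArg (fun P : ZH G => P.coeff h) heq
    simpa [iotaAt_apply, MonoidAlgebra.coeff_single_mul_apply] using this
  have sgn_zero : sgn 0 = 1 := by simp [sgn]
  -- h₀⁻¹ ∈ supp m
  have hinv : m.coeff h₀⁻¹ ≠ 0 := by
    have h1 := key 1
    rw [show Multiplicative.toAdd (1 : Multiplicative G) = 0 from rfl, map_zero,
      sgn_zero, one_mul, mul_one] at h1
    intro hz
    rw [hz, mul_zero, mul_zero] at h1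
    exact hm1 h1
  have hh0 : m.coeff h₀ ≠ 0 := by
    have h2 := key h₀
    rw [inv_mul_cancel, show Multiplicative.toAdd (1 : Multiplicative G) = 0 from rfl,
      map_zero, sgn_zero, one_mul] at h2
    intro hz
    rw [hz, mul_zero] at h2
    exact (mul_ne_zero hs0 hm1) h2.symm
  -- h₀ = 1
  have hone0 : h₀ = 1 := by
    by_contra hne
    have p1 : 0 < w (Multiplicative.toAdd h₀) :=
      hw h₀ (Finsupp.mem_support_iff.mpr hh0) hne
    have p2 : 0 < w (Multiplicative.toAdd h₀⁻¹) :=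
      hw h₀⁻¹ (Finsupp.mem_support_iff.mpr hinv) (by simpa using hne)
    rw [show Multiplicative.toAdd h₀⁻¹ = -(Multiplicative.toAdd h₀) from rfl, map_neg] at p2
    linarith
  subst hone0
  have key' : ∀ h : Multiplicative G,
      sgn (u (Multiplicative.toAdd h)) * m.coeff h
        = s * (sgn (ζ (Multiplicative.toAdd h)) * m.coeff h) := by
    intro h; simpa using key h
  -- s = 1
  have hs1 : s = 1 := by
    have h1 := key' 1
    simp only [toAdd_one, map_zero, sgn_zero, one_mul] at h1
    have h2 : (1 : ℤ) * m.coeff 1 = s * m.coeff 1 := by rw [one_mul]; exact h1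
    exact (mul_right_cancel₀ hm1 h2).symm
  subst hs1
  -- on the support, signs agree
  have hsupp : ∀ h ∈ Finsupp.support m.coeff,
      (Even (u (Multiplicative.toAdd h)) ↔ Even (ζ (Multiplicative.toAdd h))) := by
    intro h hh
    have hmh : m.coeff h ≠ 0 := Finsupp.mem_support_iff.mp hh
    have := key' h
    rw [one_mul] at this
    exact sgn_eq_iff.mp (mul_right_cancel₀ hmh this)
  -- propagate to all of G via the generating hypothesis
  set ψ : G →+ ZMod 2 := (Int.castAddHom (ZMod 2)).comp (u - ζ) with hψ
  set φ : Multiplicative G →* Multiplicative (ZMod 2) := AddMonoidHom.toMultiplicative ψ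
  have hker : ∀ x : Multiplicative G, x ∈ φ.ker := by
    have hle : Subgroup.closure ((Finsupp.support m.coeff : Finset (Multiplicative G)) :
        Set (Multiplicative G)) ≤ φ.ker := by
      rw [Subgroup.closure_le]
      intro x hx
      have hx' : x ∈ Finsupp.support m.coeff := by simpa using hx
      have hev := hsupp x hx'
      have : ψ (Multiplicative.toAdd x) = 0 := by
        rw [hψ]
        simp only [AddMonoidHom.coe_comp, Function.comp_apply, AddMonoidHom.sub_apply,
          Int.coe_castAddHom]
        rw [ZMod.intCast_zmod_eq_zero_iff_dvd]
        exact (Int.even_sub.mpr hev).two_dvd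
      simpa [MonoidHom.mem_ker, φ] using this
    intro x
    exact hle (by rw [hgen]; trivial)
  intro g
  have := hker (Multiplicative.ofAdd g)
  have hz : ψ g = 0 := by simpa [MonoidHom.mem_ker, φ] using this
  rw [hψ] at hz
  simp only [AddMonoidHom.coe_comp, Function.comp_apply, AddMonoidHom.sub_apply,
    Int.coe_castAddHom] at hz
  rw [ZMod.intCast_zmod_eq_zero_iff_dvd] at hz
  exact Int.even_sub.mp (by obtain ⟨c, hc⟩ := hz; exact ⟨c, by omega⟩)
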